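/- Let X be a compact metric space, G a group acting minimally on X by homeomorphisms, and H a real separable Hilbert space. Let (Ψ, ρ) be a continuous cocycle of affine isometries of H over this action, and consider the induced affine isometric action of G on the space C(X,H) of continuous H-valued functions, given by (I(g)φ)(x) = Ψ(g,g⁻¹·x)(φ(g⁻¹·x)) + ρ(g,g⁻¹·x). If this action has a bounded orbit — that is, there exist a continuous φ₁ : X → H and a constant C ≥ 0 such that ‖Ψ(g,x)(φ₁(x)) + ρ(g,x)‖ ≤ C for all g ∈ G and x ∈ X — then it has a fixed point: there exists a continuous φ₀ : X → H such that φ₀(g·x) = Ψ(g,x)(φ₀(x)) + ρ(g,x) for all g ∈ G and x ∈ X. -/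

import Mathlib

open Filter Topology

namespace BOCaux
set_option linter.unusedSectionVars false

variable {E : Type*} [NormedAddCommGroup E] [InnerProductSpace ℝ E]
variable {ι : Type*} [Nonempty ι]


noncomputable def rad (f : ι → E) (v : E) : ℝ := ⨆ i, ‖v - f i‖

lemma bddrad (f : ι → E) {C : ℝ} (hf : ∀ i, ‖f i‖ ≤ C) (v : E) :
    BddAbove (Set.range fun i => ‖v - f i‖) := by
  refine ⟨‖v‖ + C, ?_⟩
  rintro a ⟨i, rfl⟩
  exact (norm_sub_le _ _).trans (by linarith [hf i])

lemma norm_sub_le_rad {f : ι → E} {C : ℝ} (hf : ∀ i, ‖f i‖ ≤ C) (v : E) (i : ι) :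
    ‖v - f i‖ ≤ rad f v := le_ciSup (bddrad f hf v) i

lemma rad_nonneg {f : ι → E} {C : ℝ} (hf : ∀ i, ‖f i‖ ≤ C) (v : E) : 0 ≤ rad f v :=
  le_trans (norm_nonneg _) (norm_sub_le_rad hf v (Classical.arbitrary ι))

lemma rad_lip {f : ι → E} {C : ℝ} (hf : ∀ i, ‖f i‖ ≤ C) (u v : E) :
    rad f u ≤ rad f v + ‖u - v‖ := by
  refine ciSup_le fun i => ?_
  have h1 : ‖u - f i‖ ≤ ‖u - v‖ + ‖v - f i‖ := by
    have := norm_add_le (u - v) (v - f i)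
    simpa using this
  have := norm_sub_le_rad hf v i
  linarith

lemma rad_par {f : ι → E} {C : ℝ} (hf : ∀ i, ‖f i‖ ≤ C) (u v : E) :
    4 * rad f ((2:ℝ)⁻¹ • (u + v)) ^ 2 + ‖u - v‖ ^ 2
      ≤ 2 * rad f u ^ 2 + 2 * rad f v ^ 2 := by
  have key : ∀ s : E, 4 * ‖(2:ℝ)⁻¹ • (u + v) - s‖ ^ 2 + ‖u - v‖ ^ 2
      = 2 * ‖u - s‖ ^ 2 + 2 * ‖v - s‖ ^ 2 := by
    intro s
    have hp := parallelogram_law_with_norm ℝ (u - s) (v - s)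
    have h1 : u - s + (v - s) = (2:ℝ) • ((2:ℝ)⁻¹ • (u + v) - s) := by
      rw [smul_sub, smul_inv_smul₀ (by norm_num : (2:ℝ) ≠ 0)]
      rw [two_smul]; abel
    have h2 : u - s - (v - s) = u - v := by abel
    rw [h1, h2, norm_smul] at hp
    simp only [Real.norm_ofNat] at hp
    nlinarith [hp]
  set Q : ℝ := (2 * rad f u ^ 2 + 2 * rad f v ^ 2 - ‖u - v‖ ^ 2) / 4 with hQ
  obtain ⟨i0⟩ : Nonempty ι := inferInstance
  have hru : ∀ i, ‖u - f i‖ ≤ rad f u := norm_sub_le_rad hf u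
  have hrv : ∀ i, ‖v - f i‖ ≤ rad f v := norm_sub_le_rad hf v
  have hQ0 : 0 ≤ Q := by
    have := key (f i0)
    nlinarith [norm_nonneg ((2:ℝ)⁻¹ • (u + v) - f i0), hru i0, hrv i0,
      norm_nonneg (u - f i0), norm_nonneg (v - f i0)]
  have hmid : rad f ((2:ℝ)⁻¹ • (u + v)) ≤ Real.sqrt Q := by
    refine ciSup_le fun i => ?_
    have hsq : ‖(2:ℝ)⁻¹ • (u + v) - f i‖ ^ 2 ≤ Q := by
      have := key (f i)
      nlinarith [hru i, hrv i, norm_nonneg (u - f i), norm_nonneg (v - f i)]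
    calc ‖(2:ℝ)⁻¹ • (u + v) - f i‖
        = Real.sqrt (‖(2:ℝ)⁻¹ • (u + v) - f i‖ ^ 2) := (Real.sqrt_sq (norm_nonneg _)).symm
      _ ≤ Real.sqrt Q := Real.sqrt_le_sqrt hsq
  have h2 : rad f ((2:ℝ)⁻¹ • (u + v)) ^ 2 ≤ Q := by
    have h0 := rad_nonneg hf ((2:ℝ)⁻¹ • (u + v))
    calc rad f ((2:ℝ)⁻¹ • (u + v)) ^ 2 ≤ Real.sqrt Q ^ 2 := by
          apply pow_le_pow_left₀ h0 hmid
      _ = Q := Real.sq_sqrt hQ0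
  linarith


lemma bddBelow_rad (f : ι → E) {C : ℝ} (hf : ∀ i, ‖f i‖ ≤ C) :
    BddBelow (Set.range fun v : E => rad f v) := by
  refine ⟨0, ?_⟩; rintro a ⟨v, rfl⟩; exact rad_nonneg hf v

lemma iInf_rad_nonneg (f : ι → E) {C : ℝ} (hf : ∀ i, ‖f i‖ ≤ C) :
    0 ≤ ⨅ v : E, rad f v :=
  le_ciInf fun v => rad_nonneg hf v

lemma dist_sq_le (f : ι → E) {C : ℝ} (hf : ∀ i, ‖f i‖ ≤ C) (u v : E) :
    ‖u - v‖ ^ 2 ≤ 2 * rad f u ^ 2 + 2 * rad f v ^ 2 - 4 * (⨅ v : E, rad f v) ^ 2 := by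
  have h1 := rad_par hf u v
  have h2 : (⨅ v : E, rad f v) ≤ rad f ((2:ℝ)⁻¹ • (u + v)) :=
    ciInf_le (bddBelow_rad f hf) _
  have h3 := iInf_rad_nonneg f hf
  nlinarith [h1, h2, h3]

lemma exists_center [CompleteSpace E] (f : ι → E) {C : ℝ} (hf : ∀ i, ‖f i‖ ≤ C) :
    ∃ c : E, rad f c = ⨅ v : E, rad f v := by
  set m : ℝ := ⨅ v : E, rad f v with hm
  have hm0 : 0 ≤ m := iInf_rad_nonneg f hf
  have hex : ∀ n : ℕ, ∃ v : E, rad f v < m + 1 / (n + 1) := by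
    intro n
    apply exists_lt_of_ciInf_lt
    have : (0:ℝ) < 1 / (n + 1) := by positivity
    linarith
  choose u hu using hex
  have hcauchy : CauchySeq u := by
    rw [Metric.cauchySeq_iff']
    intro ε hε
    obtain ⟨N, hN⟩ := exists_nat_gt ((8 * m + 4) / ε ^ 2)
    refine ⟨N, fun n hn => ?_⟩
    have ha : (0:ℝ) < 1 / (N + 1) := by positivity
    have hle : (1:ℝ) / (n + 1) ≤ 1 / (N + 1) := by
      apply one_div_le_one_div_of_le (by positivity)
      exact_mod_cast by linarith [hn] 
    have h1 : rad f (u n) < m + 1 / (N + 1) := lt_of_lt_of_le (hu n) (by linarith)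
    have h2 : rad f (u N) < m + 1 / (N + 1) := hu N
    have hsq := dist_sq_le f hf (u n) (u N)
    have hrn := rad_nonneg hf (u n)
    have hrN := rad_nonneg hf (u N)
    have haN : (1:ℝ) / (N + 1) ≤ 1 := by
      rw [div_le_one (by positivity)]; linarith [(Nat.cast_nonneg N : (0:ℝ) ≤ N)]
    have hbound : ‖u n - u N‖ ^ 2 ≤ (8 * m + 4) * (1 / (N + 1)) := by
      nlinarith [h1, h2, hsq, hrn, hrN, hm0, ha, haN]
    have hNle : (8 * m + 4) * (1 / (N + 1)) < ε ^ 2 := by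
      rw [div_lt_iff₀ (by positivity)] at hN
      rw [mul_one_div, div_lt_iff₀ (by positivity : (0:ℝ) < (N:ℝ) + 1)]
      nlinarith [hN, sq_nonneg ε, hε]
    rw [dist_eq_norm]
    have : ‖u n - u N‖ ^ 2 < ε ^ 2 := lt_of_le_of_lt hbound hNle
    exact lt_of_pow_lt_pow_left₀ 2 hε.le this
  obtain ⟨c, hc⟩ := cauchySeq_tendsto_of_complete hcauchy
  refine ⟨c, le_antisymm ?_ (ciInf_le (bddBelow_rad f hf) c)⟩
  refine le_of_forall_pos_le_add fun ε hε => ?_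
  obtain ⟨N1, hN1⟩ := (Metric.tendsto_atTop.mp hc) (ε / 2) (by linarith)
  obtain ⟨N2, hN2⟩ := exists_nat_gt (2 / ε)
  set n := max N1 N2
  have h1 : dist (u n) c < ε / 2 := hN1 n (le_max_left _ _)
  have h2 : (1:ℝ) / (n + 1) < ε / 2 := by
    have hn2 : (N2:ℝ) ≤ n := by exact_mod_cast le_max_right N1 N2
    rw [div_lt_iff₀ (by positivity : (0:ℝ) < (n:ℝ) + 1)]
    rw [div_lt_iff₀ (by linarith : (0:ℝ) < ε)] at hN2
    nlinarith [hN2, hε]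
  have h3 := rad_lip hf c (u n)
  have h4 := hu n
  rw [dist_eq_norm] at h1
  have : ‖c - u n‖ = ‖u n - c‖ := norm_sub_rev _ _
  linarith [h3, h4, h1, this ▸ (le_refl ‖c - u n‖)]

lemma center_stab (f : ι → E) {C : ℝ} (hf : ∀ i, ‖f i‖ ≤ C) {c : E}
    (hc : rad f c = ⨅ v : E, rad f v) (v : E) :
    ‖v - c‖ ^ 2 ≤ 2 * rad f v ^ 2 - 2 * (⨅ v : E, rad f v) ^ 2 := by
  have := dist_sq_le f hf v c
  rw [hc] at this
  linarith




lemma exists_weak_subseq {E : Type*} [NormedAddCommGroup E] [InnerProductSpace ℝ E]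
    [CompleteSpace E] [TopologicalSpace.SeparableSpace E]
    (c : ℕ → E) (R : ℝ) (hc : ∀ n, ‖c n‖ ≤ R) :
    ∃ φ : ℕ → ℕ, StrictMono φ ∧ ∃ v : E,
      ∀ w : E, Tendsto (fun j => (inner ℝ w (c (φ j)) : ℝ)) atTop (𝓝 (inner ℝ w v)) := by
  have hR : 0 ≤ R := le_trans (norm_nonneg _) (hc 0)
  obtain ⟨e, he⟩ := TopologicalSpace.exists_dense_seq E
  -- diagonal extraction via compactness of a product of intervals
  set K : Set (ℕ → ℝ) := Set.univ.pi fun k => Set.Icc (-(‖e k‖ * R)) (‖e k‖ * R) with hK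
  have hKc : IsCompact K := isCompact_univ_pi fun k => isCompact_Icc
  set F : ℕ → ℕ → ℝ := fun n k => (inner ℝ (e k) (c n) : ℝ) with hF
  have hmem : ∀ n, F n ∈ K := by
    intro n
    rw [hK, Set.mem_univ_pi]
    intro k
    rw [Set.mem_Icc, ← abs_le]
    calc |(inner ℝ (e k) (c n) : ℝ)| ≤ ‖e k‖ * ‖c n‖ := abs_real_inner_le_norm _ _
      _ ≤ ‖e k‖ * R := mul_le_mul_of_nonneg_left (hc n) (norm_nonneg _)
  obtain ⟨L, -, φ, hφ, hconv⟩ := hKc.tendsto_subseq hmem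
  have hpt : ∀ k, Tendsto (fun j => (inner ℝ (e k) (c (φ j)) : ℝ)) atTop (𝓝 (L k)) := by
    intro k
    exact (tendsto_pi_nhds.mp hconv) k
  -- each ⟪w, c (φ j)⟫ is Cauchy
  have hcauchy : ∀ w : E, CauchySeq (fun j => (inner ℝ w (c (φ j)) : ℝ)) := by
    intro w
    rw [Metric.cauchySeq_iff']
    intro ε hε
    obtain ⟨k, hk⟩ : ∃ k, dist w (e k) < ε / (3 * (R + 1)) := by
      have hw : w ∈ closure (Set.range e) := by
        rw [he.closure_range]; trivial
      rcases Metric.mem_closure_iff.mp hw (ε / (3 * (R + 1))) (by positivity) with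
        ⟨y, ⟨k, rfl⟩, hy⟩
      exact ⟨k, hy⟩
    obtain ⟨N, hN⟩ := Metric.cauchySeq_iff'.mp (hpt k).cauchySeq (ε / 3) (by positivity)
    refine ⟨N, fun n hn => ?_⟩
    have hd := hN n hn
    rw [Real.dist_eq] at hd ⊢
    have hsplit : ∀ m : ℕ, (inner ℝ w (c m) : ℝ)
        = (inner ℝ (e k) (c m) : ℝ) + (inner ℝ (w - e k) (c m) : ℝ) := by
      intro m; rw [inner_sub_left]; ring
    have hbd : ∀ m : ℕ, |(inner ℝ (w - e k) (c m) : ℝ)| ≤ ε / (3 * (R + 1)) * R := by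
      intro m
      calc |(inner ℝ (w - e k) (c m) : ℝ)| ≤ ‖w - e k‖ * ‖c m‖ := abs_real_inner_le_norm _ _
        _ ≤ ‖w - e k‖ * R := mul_le_mul_of_nonneg_left (hc m) (norm_nonneg _)
        _ ≤ ε / (3 * (R + 1)) * R := by
            apply mul_le_mul_of_nonneg_right _ hR
            rw [← dist_eq_norm]; exact hk.le
    have hRR : ε / (3 * (R + 1)) * R ≤ ε / 3 := by
      rw [div_mul_eq_mul_div, div_le_div_iff₀ (by positivity) (by norm_num)]
      nlinarith [hε]
    have h1 := hbd (φ n); have h2 := hbd (φ N)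
    rw [hsplit (φ n), hsplit (φ N)]
    have habs : |(inner ℝ (e k) (c (φ n)) : ℝ) + (inner ℝ (w - e k) (c (φ n)) : ℝ)
        - ((inner ℝ (e k) (c (φ N)) : ℝ) + (inner ℝ (w - e k) (c (φ N)) : ℝ))|
        ≤ |(inner ℝ (e k) (c (φ n)) : ℝ) - (inner ℝ (e k) (c (φ N)) : ℝ)|
          + |(inner ℝ (w - e k) (c (φ n)) : ℝ)| + |(inner ℝ (w - e k) (c (φ N)) : ℝ)| := by
      have := abs_sub (inner ℝ (e k) (c (φ n)) + inner ℝ (w - e k) (c (φ n)) : ℝ)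
        (inner ℝ (e k) (c (φ N)) + inner ℝ (w - e k) (c (φ N)) : ℝ)
      calc |(inner ℝ (e k) (c (φ n)) : ℝ) + (inner ℝ (w - e k) (c (φ n)) : ℝ)
          - ((inner ℝ (e k) (c (φ N)) : ℝ) + (inner ℝ (w - e k) (c (φ N)) : ℝ))|
          = |((inner ℝ (e k) (c (φ n)) : ℝ) - (inner ℝ (e k) (c (φ N)) : ℝ))
            + ((inner ℝ (w - e k) (c (φ n)) : ℝ) - (inner ℝ (w - e k) (c (φ N)) : ℝ))| := by
              ring_nf
        _ ≤ _ := by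
            refine (abs_add_le _ _).trans ?_
            have := abs_sub (inner ℝ (w - e k) (c (φ n)) : ℝ) (inner ℝ (w - e k) (c (φ N)) : ℝ)
            linarith [abs_sub_abs_le_abs_sub (inner ℝ (w - e k) (c (φ n)) : ℝ)
              (inner ℝ (w - e k) (c (φ N)) : ℝ), abs_sub (inner ℝ (w - e k) (c (φ n)) : ℝ)
              (inner ℝ (w - e k) (c (φ N)) : ℝ)]
    linarith [habs, hd, h1, h2]
  -- limit functional
  set ℓ : E → ℝ := fun w => limUnder atTop (fun j => (inner ℝ w (c (φ j)) : ℝ)) with hℓ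
  have hconv' : ∀ w : E, Tendsto (fun j => (inner ℝ w (c (φ j)) : ℝ)) atTop (𝓝 (ℓ w)) := by
    intro w
    obtain ⟨a, ha⟩ := cauchySeq_tendsto_of_complete (hcauchy w)
    rw [hℓ]
    simpa [ha.limUnder_eq] using ha
  have hadd : ∀ w w' : E, ℓ (w + w') = ℓ w + ℓ w' := by
    intro w w'
    refine tendsto_nhds_unique (hconv' (w + w')) ?_
    have := (hconv' w).add (hconv' w')
    simpa [inner_add_left] using this
  have hsmul : ∀ (a : ℝ) (w : E), ℓ (a • w) = a * ℓ w := by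
    intro a w
    refine tendsto_nhds_unique (hconv' (a • w)) ?_
    have := (hconv' w).const_mul a
    simpa [real_inner_smul_left] using this
  have hbound : ∀ w : E, ‖ℓ w‖ ≤ R * ‖w‖ := by
    intro w
    have h1 : Tendsto (fun j => ‖(inner ℝ w (c (φ j)) : ℝ)‖) atTop (𝓝 ‖ℓ w‖) :=
      (hconv' w).norm
    refine le_of_tendsto h1 (Eventually.of_forall fun j => ?_)
    rw [Real.norm_eq_abs]
    calc |(inner ℝ w (c (φ j)) : ℝ)| ≤ ‖w‖ * ‖c (φ j)‖ := abs_real_inner_le_norm _ _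
      _ ≤ ‖w‖ * R := mul_le_mul_of_nonneg_left (hc _) (norm_nonneg _)
      _ = R * ‖w‖ := mul_comm _ _
  set L0 : E →ₗ[ℝ] ℝ :=
    { toFun := ℓ
      map_add' := hadd
      map_smul' := hsmul } with hL0
  set Lc : E →L[ℝ] ℝ := L0.mkContinuous R hbound with hLc
  set v : E := (InnerProductSpace.toDual ℝ E).symm Lc with hv
  refine ⟨φ, hφ, v, fun w => ?_⟩
  have : (inner ℝ w v : ℝ) = ℓ w := by
    rw [real_inner_comm]
    rw [hv, InnerProductSpace.toDual_symm_apply]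
    rfl
  rw [this]
  exact hconv' w


end BOCaux

open BOCaux

set_option maxHeartbeats 2000000 in
/-- **Theorem C**: an affine isometric action on `C(X, H)` induced by a continuous cocycle of
affine isometries over a minimal group action with a bounded orbit has a fixed point. -/
theorem bounded_orbit_on_continuous_functions_has_fixed_point
    {X : Type*} [MetricSpace X] [CompactSpace X]
    {G : Type*} [Group G]
    {H : Type*} [NormedAddCommGroup H] [InnerProductSpace ℝ H] [CompleteSpace H]
    [TopologicalSpace.SeparableSpace H]
    (act : G → X → X)
    (hact_one : ∀ x, act 1 x = x)
    (hact_mul : ∀ g h x, act (g * h) x = act g (act h x))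
    (hact_cont : ∀ g, Continuous (act g))
    (hmin : ∀ x, Dense (Set.range fun g => act g x))
    (Ψ : G → X → (H ≃ₗᵢ[ℝ] H)) (ρ : G → X → H)
    (hΨ_cont : ∀ g, Continuous fun x =>
      ((Ψ g x).toLinearIsometry.toContinuousLinearMap : H →L[ℝ] H))
    (hρ_cont : ∀ g, Continuous fun x => ρ g x)
    (hΨ_coc : ∀ g h x v, Ψ (g * h) x v = Ψ g (act h x) (Ψ h x v))
    (hρ_coc : ∀ g h x, ρ (g * h) x = ρ g (act h x) + Ψ g (act h x) (ρ h x))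
    (φ₁ : X → H) (hφ₁ : Continuous φ₁) (C : ℝ) (hC : 0 ≤ C)
    (hbounded : ∀ g x, ‖Ψ g x (φ₁ x) + ρ g x‖ ≤ C) :
    ∃ φ₀ : X → H, Continuous φ₀ ∧ ∀ g x, φ₀ (act g x) = Ψ g x (φ₀ x) + ρ g x := by
  classical
  rcases isEmpty_or_nonempty X with hX | hX
  · exact ⟨fun _ => 0, continuous_const, fun g x => (hX.false x).elim⟩
  have hG : Nonempty G := ⟨1⟩
  -- basic facts about the action
  have act_inv : ∀ (g : G) (x : X), act g⁻¹ (act g x) = x := by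
    intro g x
    rw [← hact_mul, inv_mul_cancel, hact_one]
  have act_inv' : ∀ (g : G) (x : X), act g (act g⁻¹ x) = x := by
    intro g x
    rw [← hact_mul, mul_inv_cancel, hact_one]
  -- the orbit map: orb g x = (I(g)φ₁)(x)
  set orb : G → X → H :=
    fun g x => Ψ g (act g⁻¹ x) (φ₁ (act g⁻¹ x)) + ρ g (act g⁻¹ x) with horb
  have orb_bound : ∀ g x, ‖orb g x‖ ≤ C := fun g x => hbounded g (act g⁻¹ x)
  have orb_cont : ∀ g, Continuous fun x => orb g x := by
    intro g
    have h1 : Continuous fun x : X => act g⁻¹ x := hact_cont g⁻¹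
    have h2 : Continuous fun x : X => Ψ g (act g⁻¹ x) (φ₁ (act g⁻¹ x)) := by
      have := ((hΨ_cont g).comp h1).clm_apply (hφ₁.comp h1)
      exact this
    exact h2.add ((hρ_cont g).comp h1)
  -- equivariance of the orbit map
  have orb_equiv : ∀ (h g : G) (x : X),
      orb (h * g) (act h x) = Ψ h x (orb g x) + ρ h x := by
    intro h g x
    have hy : act (h * g)⁻¹ (act h x) = act g⁻¹ x := by
      rw [mul_inv_rev, hact_mul, act_inv]
    rw [horb]
    simp only [hy]
    have h1 : Ψ (h * g) (act g⁻¹ x) (φ₁ (act g⁻¹ x))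
        = Ψ h x (Ψ g (act g⁻¹ x) (φ₁ (act g⁻¹ x))) := by
      have := hΨ_coc h g (act g⁻¹ x) (φ₁ (act g⁻¹ x))
      rwa [act_inv'] at this
    have h2 : ρ (h * g) (act g⁻¹ x)
        = ρ h x + Ψ h x (ρ g (act g⁻¹ x)) := by
      have := hρ_coc h g (act g⁻¹ x)
      rwa [act_inv'] at this
    rw [h1, h2, map_add]
    abel
  -- radius and center
  set r : X → ℝ := fun x => ⨅ v : H, rad (fun g => orb g x) v with hr
  have hcen : ∀ x : X, ∃ c : H, rad (fun g => orb g x) c = r x :=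
    fun x => exists_center _ (fun g => orb_bound g x)
  choose cen hcenspec using hcen
  -- equivariance of rad
  have rad_equiv : ∀ (h : G) (x : X) (v : H),
      rad (fun g => orb g (act h x)) (Ψ h x v + ρ h x) = rad (fun g => orb g x) v := by
    intro h x v
    have key : ∀ k : G, ‖(Ψ h x v + ρ h x) - orb k (act h x)‖ = ‖v - orb (h⁻¹ * k) x‖ := by
      intro k
      have h1 : orb k (act h x) = Ψ h x (orb (h⁻¹ * k) x) + ρ h x := by
        have := orb_equiv h (h⁻¹ * k) x
        rwa [mul_inv_cancel_left] at this
      rw [h1]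
      have h2 : (Ψ h x v + ρ h x) - (Ψ h x (orb (h⁻¹ * k) x) + ρ h x)
          = Ψ h x (v - orb (h⁻¹ * k) x) := by
        rw [map_sub]; abel
      rw [h2, (Ψ h x).norm_map]
    apply le_antisymm
    · refine ciSup_le fun k => ?_
      rw [key k]
      exact norm_sub_le_rad (fun g => orb_bound g x) v (h⁻¹ * k)
    · refine ciSup_le fun g => ?_
      have h3 : ‖v - orb g x‖ = ‖(Ψ h x v + ρ h x) - orb (h * g) (act h x)‖ := by
        rw [key (h * g), inv_mul_cancel_left]
      rw [h3]
      exact norm_sub_le_rad (fun g => orb_bound g (act h x)) _ (h * g)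
  -- equivariance of r
  have r_equiv : ∀ (h : G) (x : X), r (act h x) = r x := by
    intro h x
    apply le_antisymm
    · refine le_ciInf fun v => ?_
      calc r (act h x) ≤ rad (fun g => orb g (act h x)) (Ψ h x v + ρ h x) :=
            ciInf_le (bddBelow_rad _ (fun g => orb_bound g (act h x))) _
        _ = rad (fun g => orb g x) v := rad_equiv h x v
    · refine le_ciInf fun w => ?_
      set v : H := (Ψ h x).symm (w - ρ h x) with hv
      have hTv : Ψ h x v + ρ h x = w := by
        rw [hv, (Ψ h x).apply_symm_apply, sub_add_cancel]
      calc r x ≤ rad (fun g => orb g x) v :=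
            ciInf_le (bddBelow_rad _ (fun g => orb_bound g x)) _
        _ = rad (fun g => orb g (act h x)) w := by rw [← rad_equiv h x v, hTv]
  -- equivariance of the center
  have cen_equiv : ∀ (h : G) (x : X), cen (act h x) = Ψ h x (cen x) + ρ h x := by
    intro h x
    have hstab := center_stab (fun g => orb g (act h x)) (fun g => orb_bound g (act h x))
      (hcenspec (act h x)) (Ψ h x (cen x) + ρ h x)
    rw [show (⨅ v : H, rad (fun g => orb g (act h x)) v) = r (act h x) from rfl] at hstab
    rw [rad_equiv h x (cen x), hcenspec x, r_equiv h x] at hstab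
    have h0 : ‖(Ψ h x (cen x) + ρ h x) - cen (act h x)‖ ^ 2 ≤ 0 := by linarith
    have h1 : ‖(Ψ h x (cen x) + ρ h x) - cen (act h x)‖ = 0 := by
      nlinarith [norm_nonneg ((Ψ h x (cen x) + ρ h x) - cen (act h x))]
    rw [norm_eq_zero, sub_eq_zero] at h1
    exact h1.symm

  -- basic bounds
  have r_nonneg : ∀ x, 0 ≤ r x := fun x => iInf_rad_nonneg _ (fun g => orb_bound g x)
  have r_le : ∀ x, r x ≤ 2 * C := by
    intro x
    calc r x ≤ rad (fun g => orb g x) (orb 1 x) :=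
          ciInf_le (bddBelow_rad _ (fun g => orb_bound g x)) _
      _ ≤ 2 * C := by
          refine ciSup_le fun g => ?_
          have := norm_sub_le (orb 1 x) (orb g x)
          linarith [orb_bound 1 x, orb_bound g x]
  have cen_bound : ∀ x, ‖cen x‖ ≤ 3 * C := by
    intro x
    have h1 : ‖cen x - orb 1 x‖ ≤ r x := by
      have := norm_sub_le_rad (fun g => orb_bound g x) (cen x) 1
      rwa [hcenspec x] at this
    have h2 : ‖cen x‖ ≤ ‖cen x - orb 1 x‖ + ‖orb 1 x‖ := by
      have := norm_add_le (cen x - orb 1 x) (orb 1 x)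
      simpa using this
    linarith [orb_bound 1 x, r_le x]
  -- a weak limit of centers along a convergent sequence has small radius
  have weak_rad_le : ∀ (x : X) (z : ℕ → X) (v : H) (t : ℝ), 0 ≤ t →
      Tendsto z atTop (𝓝 x) → (∀ n, r (z n) ≤ t) →
      (∀ w : H, Tendsto (fun j => (inner ℝ w (cen (z j)) : ℝ)) atTop (𝓝 (inner ℝ w v))) →
      rad (fun g => orb g x) v ≤ t := by
    intro x z v t ht hz hrz hweak
    refine ciSup_le fun g => ?_
    set w : H := v - orb g x with hw
    have horbt : Tendsto (fun j => orb g (z j)) atTop (𝓝 (orb g x)) :=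
      ((orb_cont g).tendsto x).comp hz
    have h1 : Tendsto (fun j => (inner ℝ w (cen (z j) - orb g (z j)) : ℝ)) atTop
        (𝓝 (inner ℝ w (v - orb g x))) := by
      simp only [inner_sub_right]
      exact (hweak w).sub (Tendsto.inner tendsto_const_nhds horbt)
    have h2 : ∀ j, (inner ℝ w (cen (z j) - orb g (z j)) : ℝ) ≤ ‖w‖ * t := by
      intro j
      have ha : ‖cen (z j) - orb g (z j)‖ ≤ t := by
        have := norm_sub_le_rad (fun g' => orb_bound g' (z j)) (cen (z j)) g
        rw [hcenspec (z j)] at this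
        linarith [hrz j]
      calc (inner ℝ w (cen (z j) - orb g (z j)) : ℝ)
          ≤ ‖w‖ * ‖cen (z j) - orb g (z j)‖ := real_inner_le_norm _ _
        _ ≤ ‖w‖ * t := mul_le_mul_of_nonneg_left ha (norm_nonneg w)
    have h3 : (inner ℝ w (v - orb g x) : ℝ) = ‖w‖ ^ 2 := real_inner_self_eq_norm_sq w
    have h4 : ‖w‖ ^ 2 ≤ ‖w‖ * t := by
      rw [← h3]; exact le_of_tendsto h1 (Eventually.of_forall h2)
    nlinarith [norm_nonneg w, ht, h4]
  -- lower semicontinuity of r along sequences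
  have LSC : ∀ (x : X) (u : ℕ → X) (t : ℝ), 0 ≤ t → Tendsto u atTop (𝓝 x) →
      (∀ n, r (u n) ≤ t) → r x ≤ t := by
    intro x u t ht hu hru
    obtain ⟨σ, hσ, v, hv⟩ := exists_weak_subseq (fun n => cen (u n)) (3 * C)
      (fun n => cen_bound (u n))
    have huσ : Tendsto (fun j => u (σ j)) atTop (𝓝 x) := hu.comp hσ.tendsto_atTop
    have hkey : rad (fun g => orb g x) v ≤ t :=
      weak_rad_le x (fun j => u (σ j)) v t ht huσ (fun j => hru (σ j))
        (fun w => by simpa using hv w)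
    calc r x ≤ rad (fun g => orb g x) v :=
          ciInf_le (bddBelow_rad _ (fun g => orb_bound g x)) _
      _ ≤ t := hkey
  -- r is constant, by minimality
  have r_const : ∀ x y : X, r x = r y := by
    suffices hle : ∀ x y : X, r x ≤ r y by
      exact fun x y => le_antisymm (hle x y) (hle y x)
    intro x y
    have hx : x ∈ closure (Set.range fun g => act g y) := hmin y x
    obtain ⟨u, hu_mem, hu_lim⟩ := mem_closure_iff_seq_limit.mp hx
    choose gs hgs using hu_mem
    have hru : ∀ n, r (u n) ≤ r y := by
      intro n
      rw [← hgs n, r_equiv]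
    exact LSC x u (r y) (r_nonneg y) hu_lim hru
  -- continuity of the center map
  have cen_cont : Continuous cen := by
    rw [continuous_iff_continuousAt]
    intro x
    have goal : Tendsto cen (𝓝 x) (𝓝 (cen x)) := by
      rw [tendsto_iff_seq_tendsto]
      intro u hu
      apply tendsto_of_subseq_tendsto
      intro ns hns
      obtain ⟨σ, hσ, v, hv⟩ := exists_weak_subseq (fun n => cen (u (ns n))) (3 * C)
        (fun n => cen_bound _)
      refine ⟨σ, ?_⟩
      have hylim : Tendsto (fun j => u (ns (σ j))) atTop (𝓝 x) :=
        hu.comp (hns.comp hσ.tendsto_atTop)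
      set y : ℕ → X := fun j => u (ns (σ j)) with hy
      set m : ℝ := r x with hm
      have hm0 : 0 ≤ m := r_nonneg x
      -- the weak limit is the center at x
      have hradv : rad (fun g => orb g x) v ≤ m :=
        weak_rad_le x y v m hm0 hylim (fun j => (r_const (y j) x).le)
          (fun w => by simpa using hv w)
      have hveq : v = cen x := by
        have hstab := center_stab (fun g => orb g x) (fun g => orb_bound g x)
          (hcenspec x) v
        rw [show (⨅ v : H, rad (fun g => orb g x) v) = m from rfl] at hstab
        have hrv0 : 0 ≤ rad (fun g => orb g x) v :=
          rad_nonneg (fun g => orb_bound g x) v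
        have h0 : ‖v - cen x‖ ^ 2 ≤ 0 := by nlinarith [hstab, hradv, hrv0, hm0]
        have h1 : ‖v - cen x‖ = 0 := by
          nlinarith [norm_nonneg (v - cen x), h0]
        rwa [norm_eq_zero, sub_eq_zero] at h1
      subst hveq
      -- strong convergence
      rw [Metric.tendsto_nhds]
      intro ε hε
      set δ : ℝ := ε ^ 2 / (4 * m + 12 * C + 3) with hδ
      have hden : (0:ℝ) < 4 * m + 12 * C + 3 := by nlinarith [hm0, hC]
      have hδ0 : 0 < δ := div_pos (by positivity) hden
      have hδε : δ * (4 * m + 12 * C + 3) = ε ^ 2 := by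
        rw [hδ]; field_simp
      -- pick an almost-extremal direction
      have hlt : m - δ < rad (fun g => orb g x) (cen x) := by
        rw [hcenspec x]; exact sub_lt_self _ hδ0
      obtain ⟨g, hg⟩ := exists_lt_of_lt_ciSup
        (show m - δ < ⨆ g : G, ‖cen x - orb g x‖ from hlt)
      set w : H := cen x - orb g x with hw
      set s : H := orb g x with hs
      have hev1 : ∀ᶠ j in atTop, (inner ℝ w (cen x) : ℝ) - δ < inner ℝ w (cen (y j)) := by
        have := hv w
        exact this.eventually (eventually_gt_nhds (by linarith))
      have horbt : Tendsto (fun j => orb g (y j)) atTop (𝓝 s) :=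
        ((orb_cont g).tendsto x).comp hylim
      have hev2 : ∀ᶠ j in atTop, ‖orb g (y j) - s‖ < δ := by
        have := Metric.tendsto_nhds.mp horbt δ hδ0
        filter_upwards [this] with j hj
        rwa [dist_eq_norm] at hj
      filter_upwards [hev1, hev2] with j h1 h2
      rw [dist_eq_norm]
      set d : H := cen (y j) with hd
      set sj : H := orb g (y j) with hsj
      have hA : ‖d - sj‖ ≤ m := by
        have := norm_sub_le_rad (fun g' => orb_bound g' (y j)) (cen (y j)) g
        rw [hcenspec (y j), r_const (y j) x] at this
        exact this
      have hssj : ‖s - sj‖ < δ := by rw [norm_sub_rev]; exact h2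
      have hB : m - 2 * δ < ‖cen x - sj‖ := by
        have heq : cen x - sj = w - (sj - s) := by rw [hw]; abel
        have h3 : ‖w‖ - ‖sj - s‖ ≤ ‖w - (sj - s)‖ := norm_sub_norm_le _ _
        rw [heq]
        linarith [hg, h2]
      have hC6 : ‖d - cen x‖ ≤ 6 * C := by
        have := norm_sub_le d (cen x)
        linarith [cen_bound (y j), cen_bound x]
      have hinner1 : (inner ℝ w (d - cen x) : ℝ) > -δ := by
        rw [inner_sub_right]
        linarith [h1]
      have hinner2 : (inner ℝ (d - cen x) (s - sj) : ℝ) ≥ -(6 * C * δ) := by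
        have habs := abs_real_inner_le_norm (d - cen x) (s - sj)
        have hna := neg_abs_le (inner ℝ (d - cen x) (s - sj) : ℝ)
        nlinarith [norm_nonneg (d - cen x), norm_nonneg (s - sj), hC6, hδ0, hssj, hC]
      have hinner3 : (inner ℝ (d - cen x) (cen x - sj) : ℝ) > -δ - 6 * C * δ := by
        have hsp : cen x - sj = w + (s - sj) := by rw [hw]; abel
        rw [hsp, inner_add_right]
        have hcomm : (inner ℝ (d - cen x) w : ℝ) = inner ℝ w (d - cen x) :=
          real_inner_comm _ _
        linarith [hinner1, hinner2, hcomm]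
      have hid : ‖d - cen x‖ ^ 2
          = ‖d - sj‖ ^ 2 - ‖cen x - sj‖ ^ 2
            - 2 * (inner ℝ (d - cen x) (cen x - sj) : ℝ) := by
        have hsplit : d - sj = (d - cen x) + (cen x - sj) := by abel
        have hexp := norm_add_sq_real (d - cen x) (cen x - sj)
        rw [← hsplit] at hexp
        linarith
      have hBsq : m ^ 2 - 4 * m * δ ≤ ‖cen x - sj‖ ^ 2 := by
        rcases le_or_gt (m - 2 * δ) 0 with hc0 | hc0
        · nlinarith [sq_nonneg (‖cen x - sj‖), hm0, hδ0]
        · nlinarith [hB, hc0]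
      have hfinal : ‖d - cen x‖ ^ 2 < ε ^ 2 := by
        nlinarith [hid, hA, hBsq, hinner3, hδ0, hm0, hC, norm_nonneg (d - sj), hδε]
      exact lt_of_pow_lt_pow_left₀ 2 hε.le hfinal
    exact goal
  exact ⟨cen, cen_cont, fun g x => cen_equiv g x⟩
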